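/- In the infinite dihedral group, every element is a generalized torsion element. -/

import Mathlib

/-- `x` is a generalized torsion element: some nonempty finite product of
conjugates of `x` equals `1`. -/
def IsGenTorsion {G : Type*} [Group G] (x : G) : Prop :=
  ∃ l : List G, l ≠ [] ∧ (l.map fun g => g⁻¹ * x * g).prod = 1

/-- The generalized order of `x`: the least `k ≥ 1` such that some product of
`k` conjugates of `x` equals `1` (0 if no such `k` exists). -/
noncomputable def genOrder {G : Type*} [Group G] (x : G) : ℕ :=
  sInf {k | 0 < k ∧ ∃ l : List G, l.length = k ∧ (l.map fun g => g⁻¹ * x * g).prod = 1}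

theorem stmt1 (x : DihedralGroup 0) : IsGenTorsion x := by
  match x with
  | .r i =>
    refine ⟨[1, .sr 0], by simp, ?_⟩
    simp only [List.map_cons, List.map_nil, List.prod_cons, List.prod_nil, mul_one,
      inv_one, one_mul]
    rw [show ((DihedralGroup.sr 0 : DihedralGroup 0))⁻¹ = DihedralGroup.sr 0 from rfl,
      DihedralGroup.sr_mul_r, DihedralGroup.sr_mul_sr]
    rw [DihedralGroup.r_mul_r]
    simp [DihedralGroup.one_def, -DihedralGroup.r_zero]
  | .sr i =>
    refine ⟨[1, 1], by simp, ?_⟩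
    simp only [List.map_cons, List.map_nil, List.prod_cons, List.prod_nil, mul_one,
      inv_one, one_mul]
    rw [DihedralGroup.sr_mul_sr]
    simp [DihedralGroup.one_def, -DihedralGroup.r_zero]
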